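/- For every c > 0 there exists r₀ > 0, depending only on c, such that for every subset A ⊆ S^{n−1}, every real T ≥ r₀, and every integer ℓ > c² + 1, setting c_ℓ = c·(1 − c²/(2ℓ))^{1/2}, C₀ = {x ∈ 𝓛 : x_{n+2} ≤ c² + 1} and C_ℓ = {x ∈ 𝓛 : x_{n+2} ≤ ℓ}, one has the inclusions F_{T−r₀, c_ℓ, A} ∖ C_ℓ ⊆ E_{T,c,A} ∖ C₀ ⊆ F_{T+r₀, c, A}. -/

import Mathlib

noncomputable section

open MeasureTheory Metric Filter Topology
open scoped ENNReal

/-- The index of the coordinate `x_{n+2}` (0-indexed: `n+1`). -/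
def lastC (n : ℕ) : Fin (n + 2) := Fin.last (n + 1)

/-- The index of the coordinate `x_{n+1}` (0-indexed: `n`). -/
def sndC (n : ℕ) : Fin (n + 2) := ⟨n, by omega⟩

/-- The quadratic form `Q(x) = x_1² + ⋯ + x_{n+1}² − x_{n+2}²`. -/
def Qf (n : ℕ) (x : EuclideanSpace ℝ (Fin (n + 2))) : ℝ :=
  (∑ i : Fin (n + 1), x (Fin.castSucc i) ^ 2) - x (lastC n) ^ 2

/-- The positive light cone. -/
def lightCone (n : ℕ) : Set (EuclideanSpace ℝ (Fin (n + 2))) :=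
  {x | Qf n x = 0 ∧ 0 ≤ x (lastC n)}

/-- `Λ₀`: the intersection of the light cone with `ℤ^{n+1} × ℤ_{>0}`. -/
def Lat0 (n : ℕ) : Set (EuclideanSpace ℝ (Fin (n + 2))) :=
  {x | x ∈ lightCone n ∧ (∀ i, ∃ m : ℤ, x i = (m : ℝ)) ∧ 0 < x (lastC n)}

/-- The set `F_{T,c}`. -/
def Fset (n : ℕ) (T c : ℝ) : Set (EuclideanSpace ℝ (Fin (n + 2))) :=
  {x | x ∈ lightCone n ∧ x (lastC n) ^ 2 - x (sndC n) ^ 2 < c ^ 2 ∧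
    1 ≤ x (sndC n) + x (lastC n) ∧ x (sndC n) + x (lastC n) < Real.exp T}

/-- The set `E_{T,c}`. -/
def Eset (n : ℕ) (T c : ℝ) : Set (EuclideanSpace ℝ (Fin (n + 2))) :=
  {x | x ∈ lightCone n ∧ 2 * x (lastC n) * (x (lastC n) - x (sndC n)) < c ^ 2 ∧
    1 ≤ x (lastC n) ∧ x (lastC n) < Real.cosh T}

/-- The first `n+1` coordinates of a point of `ℝ^{n+2}`. -/
def firstPart (n : ℕ) (x : EuclideanSpace ℝ (Fin (n + 2))) : EuclideanSpace ℝ (Fin (n + 1)) :=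
  WithLp.toLp 2 (fun i => x (Fin.castSucc i))

/-- The first `n` coordinates of a point of `ℝ^{n+2}`. -/
def headN (n : ℕ) (x : EuclideanSpace ℝ (Fin (n + 2))) : EuclideanSpace ℝ (Fin n) :=
  WithLp.toLp 2 (fun i => x (Fin.castLE (by omega : n ≤ n + 2) i))

/-- The direction map `π(x) = (x_1,…,x_n)/‖(x_1,…,x_n)‖`. -/
def dir (n : ℕ) (x : EuclideanSpace ℝ (Fin (n + 2))) : EuclideanSpace ℝ (Fin n) :=
  ‖headN n x‖⁻¹ • headN n x

/-- The set `F_{T,c,A}`. -/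
def FsetA (n : ℕ) (T c : ℝ) (A : Set ↑(sphere (0 : EuclideanSpace ℝ (Fin n)) 1)) :
    Set (EuclideanSpace ℝ (Fin (n + 2))) :=
  {x | x ∈ Fset n T c ∧ headN n x ≠ 0 ∧ dir n x ∈ Subtype.val '' A}

/-- The set `E_{T,c,A}`. -/
def EsetA (n : ℕ) (T c : ℝ) (A : Set ↑(sphere (0 : EuclideanSpace ℝ (Fin n)) 1)) :
    Set (EuclideanSpace ℝ (Fin (n + 2))) :=
  {x | x ∈ Eset n T c ∧ headN n x ≠ 0 ∧ dir n x ∈ Subtype.val '' A}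


lemma cone_sq (n : ℕ) (x : EuclideanSpace ℝ (Fin (n + 2))) (hx : x ∈ lightCone n) :
    x (sndC n) ^ 2 ≤ x (lastC n) ^ 2 := by
  have h : Qf n x = 0 := hx.1
  unfold Qf at h
  have hid : Fin.castSucc (Fin.last n) = sndC n := rfl
  have hsum : x (Fin.castSucc (Fin.last n)) ^ 2 ≤ ∑ i : Fin (n + 1), x (Fin.castSucc i) ^ 2 :=
    Finset.single_le_sum (f := fun i : Fin (n + 1) => x (Fin.castSucc i) ^ 2)
      (fun i _ => sq_nonneg _) (Finset.mem_univ (Fin.last n))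
  rw [hid] at hsum
  linarith

lemma cone_abs (n : ℕ) (x : EuclideanSpace ℝ (Fin (n + 2))) (hx : x ∈ lightCone n) :
    |x (sndC n)| ≤ x (lastC n) := by
  have h1 : Real.sqrt (x (sndC n) ^ 2) ≤ Real.sqrt (x (lastC n) ^ 2) :=
    Real.sqrt_le_sqrt (cone_sq n x hx)
  rwa [Real.sqrt_sq_eq_abs, Real.sqrt_sq hx.2] at h1

set_option maxHeartbeats 1000000 in
/-- **Sandwiching `E_{T,c,A}` between sets `F_{T,c,A}`** (Section 3.1). -/
theorem Eset_sandwich (n : ℕ) (hn : 1 ≤ n) (c : ℝ) (hc : 0 < c) :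
    ∃ r₀ : ℝ, 0 < r₀ ∧
      ∀ A : Set ↑(sphere (0 : EuclideanSpace ℝ (Fin n)) 1),
        ∀ T : ℝ, r₀ ≤ T →
          ∀ ℓ : ℤ, (c ^ 2 + 1 : ℝ) < (ℓ : ℝ) →
            FsetA n (T - r₀) (c * Real.sqrt (1 - c ^ 2 / (2 * (ℓ : ℝ)))) A \
                {x ∈ lightCone n | x (lastC n) ≤ (ℓ : ℝ)} ⊆
              EsetA n T c A \ {x ∈ lightCone n | x (lastC n) ≤ c ^ 2 + 1} ∧
            EsetA n T c A \ {x ∈ lightCone n | x (lastC n) ≤ c ^ 2 + 1} ⊆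
              FsetA n (T + r₀) c A := by
  refine ⟨1, one_pos, fun A T hT ℓ hℓ => ?_⟩
  set u : ℝ := (ℓ : ℝ) with hu
  have hu2 : (2 : ℝ) ≤ u := by
    have h1 : (1 : ℤ) < ℓ := by
      have h0 : (1 : ℝ) < (ℓ : ℝ) := by nlinarith [sq_nonneg c]
      exact_mod_cast h0
    have h2 : (2 : ℤ) ≤ ℓ := by omega
    rw [hu]; exact_mod_cast h2
  have hupos : (0 : ℝ) < u := by linarith
  have hk0 : (0 : ℝ) ≤ 1 - c ^ 2 / (2 * u) := by
    have h : c ^ 2 / (2 * u) ≤ 1 := by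
      rw [div_le_one (by linarith)]
      nlinarith
    linarith
  set c' : ℝ := c * Real.sqrt (1 - c ^ 2 / (2 * u)) with hc'
  set e : ℝ := c ^ 4 / (2 * u) with hedef
  have he0 : (0 : ℝ) ≤ e := by positivity
  have he2 : e * (2 * u) = c ^ 4 := by
    rw [hedef]; field_simp
  have hc'sq : c' ^ 2 = c ^ 2 - e := by
    rw [hc', mul_pow, Real.sq_sqrt hk0, hedef]; ring
  have heC : e ≤ c ^ 2 := by
    rw [hedef, div_le_iff₀ (by linarith)]
    nlinarith
  constructor
  · rintro x ⟨hxF, hxC⟩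
    obtain ⟨⟨hcone, h1, h2, h3⟩, hhead, hdir⟩ := hxF
    set a : ℝ := x (lastC n) with ha
    set b : ℝ := x (sndC n) with hb
    have hua : u < a := by
      by_contra h
      exact hxC ⟨hcone, le_of_not_gt h⟩
    have habs : |b| ≤ a := cone_abs n x hcone
    have hba : b ≤ a := (abs_le.mp habs).2
    have hab0 : (0 : ℝ) ≤ a - b := by linarith
    have h1' : a ^ 2 - b ^ 2 < c ^ 2 - e := by rw [← hc'sq]; exact h1
    have hdlt : a - b < c ^ 2 := by
      nlinarith [mul_le_mul_of_nonneg_left h2 hab0]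
    have hbpos : 1 < b := by linarith
    have hS : u < a + b := by linarith
    have hDu : (a - b) * u < c ^ 2 - e := by
      nlinarith [mul_le_mul_of_nonneg_left (le_of_lt hS) hab0]
    have hDu0 : 0 ≤ (a - b) * u := mul_nonneg hab0 (le_of_lt hupos)
    have hD2 : (a - b) ^ 2 ≤ e := by
      have h4 : ((a - b) * u) * ((a - b) * u) < (c ^ 2 - e) * (c ^ 2 - e) :=
        mul_self_lt_mul_self hDu0 hDu
      have h5 : (c ^ 2 - e) * (c ^ 2 - e) ≤ c ^ 4 := by nlinarith
      have huu : 2 * u ≤ u * u := by nlinarith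
      nlinarith [mul_le_mul_of_nonneg_left huu (sq_nonneg (a - b))]
    have e1 : 2 * a * (a - b) < c ^ 2 := by nlinarith
    have e2 : (1 : ℝ) ≤ a := by linarith
    have e3 : a < Real.cosh T := by
      have hexp2 : (2 : ℝ) ≤ Real.exp 1 := by
        have := Real.add_one_le_exp 1; linarith
      have hlt : a < Real.exp (T - 1) := by linarith
      have hle : Real.exp (T - 1) ≤ Real.exp T / 2 := by
        rw [Real.exp_sub]
        exact div_le_div_of_nonneg_left (le_of_lt (Real.exp_pos T)) (by norm_num) hexp2
      have hcosh : Real.cosh T = (Real.exp T + Real.exp (-T)) / 2 := Real.cosh_eq T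
      have hp := Real.exp_pos (-T)
      linarith
    refine ⟨⟨⟨hcone, e1, e2, e3⟩, hhead, hdir⟩, fun hmem => ?_⟩
    have hle2 : a ≤ c ^ 2 + 1 := hmem.2
    linarith
  · rintro x ⟨hxE, hxC⟩
    obtain ⟨⟨hcone, e1, e2, e3⟩, hhead, hdir⟩ := hxE
    set a : ℝ := x (lastC n) with ha
    set b : ℝ := x (sndC n) with hb
    have hca : c ^ 2 + 1 < a := by
      by_contra h
      exact hxC ⟨hcone, le_of_not_gt h⟩
    have habs : |b| ≤ a := cone_abs n x hcone
    have hba : b ≤ a := (abs_le.mp habs).2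
    have hab0 : (0 : ℝ) ≤ a - b := by linarith
    have f1 : a ^ 2 - b ^ 2 < c ^ 2 := by
      nlinarith [mul_le_mul_of_nonneg_left hba hab0]
    have f2 : (1 : ℝ) ≤ b + a := by
      nlinarith [sq_nonneg (2 * a - 1)]
    have f3 : b + a < Real.exp (T + 1) := by
      have hexp2 : (2 : ℝ) ≤ Real.exp 1 := by
        have := Real.add_one_le_exp 1; linarith
      have hcosh : Real.cosh T = (Real.exp T + Real.exp (-T)) / 2 := Real.cosh_eq T
      have hmono : Real.exp (-T) ≤ Real.exp T := Real.exp_le_exp.mpr (by linarith)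
      have hle : 2 * Real.exp T ≤ Real.exp (T + 1) := by
        rw [Real.exp_add]
        nlinarith [Real.exp_pos T]
      linarith
    exact ⟨⟨hcone, f1, f2, f3⟩, hhead, hdir⟩
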